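/- Let $\mathcal{Q}^*$ denote the set of all closed axis-parallel hypercubes contained in $[0,1]^d$, equipped with the metric $\rho^*(Q_1, Q_2) = \sqrt{|Q_1 \triangle Q_2|}$. Then there exists a constant $C$ depending only on $d$ such that for all $u, \delta \in (0,1]$, the packing number satisfies $\mathcal{K}((\delta u)^{1/2}, \rho^*, \{Q \in \mathcal{Q}^* : |Q| \le \delta\}) \le C\, \delta^{-1} u^{-(d+1)}$. -/

import Mathlib

open MeasureTheory

/-- The symmetric-difference pseudometric `ρ*(A,B) = √|A △ B|`. -/
noncomputable def rhoStar {d : ℕ} (A B : Set (Fin d → ℝ)) : ℝ :=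
  Real.sqrt ((volume (symmDiff A B)).toReal)

lemma pow_sub_pow_le_aux : ∀ (n : ℕ) (a b : ℝ), 0 ≤ b → b ≤ a →
    a ^ n - b ^ n ≤ n * (a - b) * a ^ (n - 1) := by
  intro n
  induction n with
  | zero => intro a b _ _; simp
  | succ n ih =>
    intro a b hb hba
    cases n with
    | zero => simp
    | succ k =>
      have h0a : 0 ≤ a := hb.trans hba
      have key : a ^ (k+2) - b ^ (k+2) = a * (a ^ (k+1) - b ^ (k+1)) + (a - b) * b ^ (k+1) := by
        ring
      have h1 : a * (a ^ (k+1) - b ^ (k+1)) ≤ a * ((k+1) * (a - b) * a ^ k) :=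
        mul_le_mul_of_nonneg_left (by simpa using ih a b hb hba) h0a
      have h2 : (a - b) * b ^ (k+1) ≤ (a - b) * a ^ (k+1) :=
        mul_le_mul_of_nonneg_left (pow_le_pow_left₀ hb hba _) (by linarith)
      have h3 : a * ((k+1) * (a - b) * a ^ k) = (k+1) * (a - b) * a ^ (k+1) := by ring
      rw [key]
      push_cast
      nlinarith [pow_nonneg h0a (k+1), pow_nonneg hb (k+1)]

lemma cube_symmDiff_le (d : ℕ) (a b : Fin d → ℝ) (ha hb ε : ℝ)
    (h0a : 0 ≤ ha) (h0b : 0 ≤ hb)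
    (hab : ∀ i, |a i - b i| ≤ ε) :
    (volume (symmDiff (Set.Icc a (fun i => a i + ha)) (Set.Icc b (fun i => b i + hb)))).toReal
      ≤ ha ^ d + hb ^ d - 2 * (max (min ha hb - ε) 0) ^ d := by
  set A := Set.Icc a (fun i => a i + ha) with hA
  set B := Set.Icc b (fun i => b i + hb) with hB
  set c : ℝ := max (min ha hb - ε) 0 with hc
  have hc0 : 0 ≤ c := le_max_right _ _
  have hvA : volume A = ENNReal.ofReal (ha ^ d) := by
    rw [hA, Real.volume_Icc_pi]
    simp only [add_sub_cancel_left]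
    rw [Finset.prod_const, ← ENNReal.ofReal_pow h0a, Finset.card_univ, Fintype.card_fin]
  have hvB : volume B = ENNReal.ofReal (hb ^ d) := by
    rw [hB, Real.volume_Icc_pi]
    simp only [add_sub_cancel_left]
    rw [Finset.prod_const, ← ENNReal.ofReal_pow h0b, Finset.card_univ, Fintype.card_fin]
  have hI : ENNReal.ofReal (c ^ d) ≤ volume (A ∩ B) := by
    rw [hA, hB, Set.Icc_inter_Icc, Real.volume_Icc_pi, ENNReal.ofReal_pow hc0]
    have : (ENNReal.ofReal c) ^ d = ∏ _i : Fin d, ENNReal.ofReal c := by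
      simp [Finset.prod_const]
    rw [this]
    apply Finset.prod_le_prod
    · intro i _; exact zero_le
    · intro i _
      set r : ℝ := ((fun i => a i + ha) ⊓ fun i => b i + hb) i - (a ⊔ b) i with hr
      have h1 := abs_le.mp (hab i)
      have hmr : min ha hb - ε ≤ r := by
        simp only [hr, Pi.inf_apply, Pi.sup_apply]
        have hm1 : min (a i) (b i) + min ha hb ≤ min (a i + ha) (b i + hb) :=
          le_min (add_le_add (min_le_left _ _) (min_le_left _ _))
            (add_le_add (min_le_right _ _) (min_le_right _ _))
        have hm2 : max (a i) (b i) ≤ min (a i) (b i) + ε := by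
          rcases le_total (a i) (b i) with hle | hle
          · rw [max_eq_right hle, min_eq_left hle]; linarith [h1.1]
          · rw [max_eq_left hle, min_eq_right hle]; linarith [h1.2]
        linarith
      rcases le_or_gt 0 r with h2 | h2
      · exact ENNReal.ofReal_le_ofReal (by rw [hc]; exact max_le (by linarith) h2)
      · have : c = 0 := by rw [hc]; exact max_eq_right (by linarith)
        simp [this]
  have hmA : MeasurableSet A := measurableSet_Icc
  have hmB : MeasurableSet B := measurableSet_Icc
  have hfA : volume A ≠ ⊤ := by rw [hvA]; exact ENNReal.ofReal_ne_top
  have hfB : volume B ≠ ⊤ := by rw [hvB]; exact ENNReal.ofReal_ne_top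
  have hfI : volume (A ∩ B) ≠ ⊤ :=
    (lt_of_le_of_lt (measure_mono Set.inter_subset_left) hfA.lt_top).ne
  have hdA : volume (A \ B) = volume A - volume (A ∩ B) := by
    rw [← Set.diff_self_inter]
    exact measure_diff Set.inter_subset_left (hmA.inter hmB).nullMeasurableSet hfI
  have hdB : volume (B \ A) = volume B - volume (A ∩ B) := by
    rw [← Set.diff_self_inter, Set.inter_comm B A]
    exact measure_diff Set.inter_subset_right (hmA.inter hmB).nullMeasurableSet hfI
  have hsd : volume (symmDiff A B) = volume (A \ B) + volume (B \ A) :=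
    measure_symmDiff_eq hmA.nullMeasurableSet hmB.nullMeasurableSet
  have hfd1 : volume (A \ B) ≠ ⊤ := (lt_of_le_of_lt (measure_mono Set.diff_subset) hfA.lt_top).ne
  have hfd2 : volume (B \ A) ≠ ⊤ := (lt_of_le_of_lt (measure_mono Set.diff_subset) hfB.lt_top).ne
  set x : ℝ := (volume (A ∩ B)).toReal with hx
  have hIx : c ^ d ≤ x := by
    rw [hx, ← ENNReal.toReal_ofReal (pow_nonneg hc0 d)]
    exact ENNReal.toReal_mono hfI hI
  have hiA : volume (A ∩ B) ≤ volume A := measure_mono Set.inter_subset_left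
  have hiB : volume (A ∩ B) ≤ volume B := measure_mono Set.inter_subset_right
  have htA : (volume (A \ B)).toReal = ha ^ d - x := by
    rw [hdA, ENNReal.toReal_sub_of_le hiA hfA, hvA,
      ENNReal.toReal_ofReal (pow_nonneg h0a d)]
  have htB : (volume (B \ A)).toReal = hb ^ d - x := by
    rw [hdB, ENNReal.toReal_sub_of_le hiB hfB, hvB,
      ENNReal.toReal_ofReal (pow_nonneg h0b d)]
  rw [hsd, ENNReal.toReal_add hfd1 hfd2, htA, htB]
  linarith

lemma cube_symmDiff_le' (d : ℕ) (hd : 1 ≤ d) (a b : Fin d → ℝ) (ha hb ε Bd : ℝ)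
    (h0a : 0 ≤ ha) (h0b : 0 ≤ hb) (hε : 0 ≤ ε) (hBa : ha ≤ Bd) (hBb : hb ≤ Bd)
    (hab : ∀ i, |a i - b i| ≤ ε) (hh : |ha - hb| ≤ ε) :
    (volume (symmDiff (Set.Icc a (fun i => a i + ha)) (Set.Icc b (fun i => b i + hb)))).toReal
      ≤ 4 * d * ε * Bd ^ (d - 1) := by
  refine le_trans (cube_symmDiff_le d a b ha hb ε h0a h0b hab) ?_
  set b0 : ℝ := max ha hb with hb0
  set c : ℝ := max (min ha hb - ε) 0 with hcdef
  have hc0 : 0 ≤ c := le_max_right _ _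
  have h0b0 : 0 ≤ b0 := le_trans h0a (le_max_left _ _)
  have hcb0 : c ≤ b0 := by
    apply max_le _ h0b0
    have : min ha hb ≤ b0 := le_trans (min_le_left _ _) (le_max_left _ _)
    linarith
  have hgap : b0 - c ≤ 2 * ε := by
    have habs := abs_le.mp hh
    have hminmax : b0 - ε ≤ min ha hb := by
      rcases le_total ha hb with hle | hle
      · rw [hb0, max_eq_right hle, min_eq_left hle]; linarith
      · rw [hb0, max_eq_left hle, min_eq_right hle]; linarith
    have : b0 - 2 * ε ≤ c := le_trans (by linarith) (le_max_left _ _)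
    linarith
  have hkey : b0 ^ d - c ^ d ≤ d * (b0 - c) * b0 ^ (d - 1) :=
    pow_sub_pow_le_aux d b0 c hc0 hcb0
  have hBd0 : 0 ≤ Bd := le_trans h0b0 (max_le hBa hBb)
  have hb0Bd : b0 ≤ Bd := max_le hBa hBb
  have hpow : b0 ^ (d - 1) ≤ Bd ^ (d - 1) := pow_le_pow_left₀ h0b0 hb0Bd _
  have h2 : d * (b0 - c) * b0 ^ (d - 1) ≤ d * (2 * ε) * Bd ^ (d - 1) := by
    apply mul_le_mul
    · apply mul_le_mul_of_nonneg_left hgap (Nat.cast_nonneg d)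
    · exact hpow
    · exact pow_nonneg h0b0 _
    · positivity
  have h3 : ha ^ d ≤ b0 ^ d := pow_le_pow_left₀ h0a (le_max_left _ _) _
  have h4 : hb ^ d ≤ b0 ^ d := pow_le_pow_left₀ h0b (le_max_right _ _) _
  nlinarith [pow_nonneg hBd0 (d - 1)]

lemma floor_div_close (x y ε : ℝ) (hx : 0 ≤ x) (hy : 0 ≤ y) (hε : 0 < ε)
    (hf : ⌊x / ε⌋₊ = ⌊y / ε⌋₊) : |x - y| ≤ ε := by
  have h1 : x / ε < ⌊x / ε⌋₊ + 1 := Nat.lt_floor_add_one _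
  have h2 : (⌊y / ε⌋₊ : ℝ) ≤ y / ε := Nat.floor_le (by positivity)
  have h3 : y / ε < ⌊y / ε⌋₊ + 1 := Nat.lt_floor_add_one _
  have h4 : (⌊x / ε⌋₊ : ℝ) ≤ x / ε := Nat.floor_le (by positivity)
  rw [hf] at h1 h4
  rw [abs_le]
  constructor
  · have h5 : y / ε - x / ε < 1 := by linarith
    rw [← sub_div] at h5
    have := (div_lt_one hε).mp h5
    linarith
  · have h5 : x / ε - y / ε < 1 := by linarith
    rw [← sub_div] at h5
    have := (div_lt_one hε).mp h5
    linarith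

/-- Packing-number bound for hypercubes in `[0,1]^d` of volume at most
`δ`: any family of such cubes with pairwise `ρ*`-distance exceeding `(δu)^{1/2}`
has at most `C δ⁻¹ u^{-(d+1)}` members, with `C` depending only on `d`. -/
theorem packing_hypercubes (d : ℕ) (hd : 1 ≤ d) :
    ∃ C : ℝ, 0 < C ∧ ∀ u δ : ℝ, u ∈ Set.Ioc (0:ℝ) 1 → δ ∈ Set.Ioc (0:ℝ) 1 →
      ∀ (m : ℕ) (t : Fin m → (Fin d → ℝ)) (h : Fin m → ℝ),
        (∀ j, 0 < h j) →
        (∀ j i, 0 ≤ t j i ∧ t j i + h j ≤ 1) →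
        (∀ j, (volume (Set.Icc (t j) (fun i => t j i + h j))).toReal ≤ δ) →
        (∀ j k, j ≠ k →
          Real.sqrt (δ * u) < rhoStar (Set.Icc (t j) (fun i => t j i + h j))
            (Set.Icc (t k) (fun i => t k i + h k))) →
        (m : ℝ) ≤ C * δ⁻¹ * (u ^ (d + 1))⁻¹ := by
  have hd0 : (0:ℝ) < d := by exact_mod_cast Nat.lt_of_lt_of_le Nat.zero_lt_one hd
  refine ⟨5 * d * (8 * d) ^ d, by positivity, ?_⟩
  rintro u δ ⟨hu0, hu1⟩ ⟨hδ0, hδ1⟩ m t h hpos hbox hvol hpack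
  set Bd : ℝ := δ ^ ((d : ℝ)⁻¹) with hBddef
  have hBd0 : 0 < Bd := Real.rpow_pos_of_pos hδ0 _
  have hBd1 : Bd ≤ 1 := Real.rpow_le_one hδ0.le hδ1 (by positivity)
  have hBdd : Bd ^ d = δ := by
    rw [hBddef, ← Real.rpow_natCast (δ ^ ((d : ℝ)⁻¹)) d, ← Real.rpow_mul hδ0.le,
      inv_mul_cancel₀ (ne_of_gt hd0), Real.rpow_one]
  set ε : ℝ := u * Bd / (4 * d) with hεdef
  have hε0 : 0 < ε := by positivity
  have hε1 : ε ≤ 1 := by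
    rw [hεdef, div_le_one (by positivity)]
    have hd1 : (1:ℝ) ≤ d := by exact_mod_cast hd
    nlinarith [mul_le_one₀ hu1 hBd0.le hBd1]
  -- each cube has volume (h j)^d and side bound h j ≤ Bd
  have hvol' : ∀ j, (volume (Set.Icc (t j) (fun i => t j i + h j))).toReal = h j ^ d := by
    intro j
    rw [Real.volume_Icc_pi_toReal (fun i => by linarith [(hpos j)])]
    simp [Finset.prod_const]
  have hhBd : ∀ j, h j ≤ Bd := by
    intro j
    have h1 : h j ^ d ≤ Bd ^ d := by rw [hBdd]; rw [← hvol' j]; exact hvol j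
    exact le_of_pow_le_pow_left₀ (by omega) hBd0.le h1
  have ht1 : ∀ j i, t j i ≤ 1 := fun j i => by linarith [(hbox j i).2, hpos j]
  set N : ℕ := ⌊1 / ε⌋₊ + 1 with hNdef
  set M : ℕ := ⌊Bd / ε⌋₊ + 1 with hMdef
  -- bucketing map
  have hbN : ∀ j i, ⌊t j i / ε⌋₊ < N := by
    intro j i
    have hle : t j i / ε ≤ 1 / ε := by gcongr; exact ht1 j i
    have := Nat.floor_le_floor hle
    omega
  have hbM : ∀ j, ⌊h j / ε⌋₊ < M := by
    intro j
    have hle : h j / ε ≤ Bd / ε := by gcongr; exact hhBd j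
    have := Nat.floor_le_floor hle
    omega
  set f : Fin m → (Fin d → Fin N) × Fin M :=
    fun j => (fun i => ⟨⌊t j i / ε⌋₊, hbN j i⟩, ⟨⌊h j / ε⌋₊, hbM j⟩) with hfdef
  have hf : Function.Injective f := by
    intro j k hjk
    by_contra hne
    have hp := hpack j k hne
    have htc : ∀ i, |t j i - t k i| ≤ ε := by
      intro i
      have := congrFun (congrArg Prod.fst hjk) i
      have heq : ⌊t j i / ε⌋₊ = ⌊t k i / ε⌋₊ := by
        simpa [hfdef] using congrArg Fin.val this
      exact floor_div_close _ _ _ (hbox j i).1 (hbox k i).1 hε0 heq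
    have hhc : |h j - h k| ≤ ε := by
      have := congrArg Prod.snd hjk
      have heq : ⌊h j / ε⌋₊ = ⌊h k / ε⌋₊ := by
        simpa [hfdef] using congrArg Fin.val this
      exact floor_div_close _ _ _ (hpos j).le (hpos k).le hε0 heq
    have hb := cube_symmDiff_le' d hd (t j) (t k) (h j) (h k) ε Bd
      (hpos j).le (hpos k).le hε0.le (hhBd j) (hhBd k) htc hhc
    have hεB : 4 * d * ε * Bd ^ (d - 1) = δ * u := by
      rw [hεdef]
      have : (4:ℝ) * d * (u * Bd / (4 * d)) = u * Bd := by field_simp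
      rw [this, mul_assoc, ← pow_succ' Bd (d-1)]
      have : d - 1 + 1 = d := by omega
      rw [this, hBdd]; ring
    rw [hεB] at hb
    have hlt : δ * u < (volume (symmDiff (Set.Icc (t j) (fun i => t j i + h j))
        (Set.Icc (t k) (fun i => t k i + h k)))).toReal := by
      have h0 : 0 ≤ δ * u := by positivity
      exact (Real.sqrt_lt_sqrt_iff h0).mp hp
    linarith
  have hcard : m ≤ N ^ d * M := by
    have := Fintype.card_le_of_injective f hf
    simpa [Fintype.card_fin] using this
  -- numeric bounds
  have hN : (N : ℝ) ≤ 2 / ε := by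
    have h1 : (⌊1 / ε⌋₊ : ℝ) ≤ 1 / ε := Nat.floor_le (by positivity)
    have h2 : (1:ℝ) ≤ 1 / ε := (le_div_iff₀ hε0).mpr (by linarith)
    push_cast [hNdef]
    rw [show (2:ℝ) / ε = 1 / ε + 1 / ε by ring]
    linarith
  have hM : (M : ℝ) ≤ 5 * d / u := by
    have h1 : (⌊Bd / ε⌋₊ : ℝ) ≤ Bd / ε := Nat.floor_le (by positivity)
    have h2 : Bd / ε = 4 * d / u := by
      rw [hεdef]; field_simp
    have h3 : (1:ℝ) ≤ d / u := by
      rw [le_div_iff₀ hu0]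
      have : (1:ℝ) ≤ d := by exact_mod_cast hd
      nlinarith
    rw [h2] at h1
    push_cast [hMdef]
    rw [h2]
    have : (5:ℝ) * d / u = 4 * d / u + d / u := by ring
    rw [this]
    linarith
  have hNd : (N : ℝ) ^ d ≤ (2 / ε) ^ d := pow_le_pow_left₀ (Nat.cast_nonneg N) hN _
  have hmain : (m : ℝ) ≤ (2 / ε) ^ d * (5 * d / u) := by
    have h0 : (m:ℝ) ≤ (N:ℝ) ^ d * (M:ℝ) := by exact_mod_cast hcard
    refine le_trans h0 ?_
    apply mul_le_mul hNd hM (Nat.cast_nonneg M) (by positivity)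
  refine le_trans hmain (le_of_eq ?_)
  have hεd : (2 / ε) ^ d = (8 * d) ^ d / (u ^ d * δ) := by
    have h1 : 2 / ε = 8 * d / (u * Bd) := by
      rw [hεdef]; field_simp; ring
    rw [h1, div_pow, mul_pow u Bd, hBdd]
  rw [hεd]
  have hud : u ^ (d + 1) = u ^ d * u := pow_succ u d
  rw [hud]
  field_simp
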